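/- There is an absolute constant C < ∞ such that for every nonnegative integer k and positive integers n, N with k ≤ n ≤ N/3 and N ≥ n^{3/2}: C(n,k)·C(N−n, n−k) / C(N,n) ≤ (C·n / (√(k ∨ 1) · ((n−k) ∨ 1))) · exp( k·log(e·n²/(N·k)) − n²/N + 2kn/N ), where the term k·log(e·n²/(N·k)) is interpreted as 0 when k = 0. -/

import Mathlib

open Real

noncomputable section

open Filter Stirling Topology in
private lemma aux_sqrtpi_le_stirlingSeq (m : ℕ) : Real.sqrt π ≤ stirlingSeq (m + 1) := by
  have h : Tendsto (stirlingSeq ∘ Nat.succ) atTop (𝓝 (Real.sqrt π)) := by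
    have h2 : Tendsto (fun n : ℕ => stirlingSeq (n + 1)) atTop (𝓝 (Real.sqrt π)) :=
      (Filter.tendsto_add_atTop_iff_nat 1).mpr tendsto_stirlingSeq_sqrt_pi
    exact h2
  exact stirlingSeq'_antitone.le_of_tendsto h m

private lemma aux_factorial_ge (k : ℕ) (hk : 0 < k) :
    Real.sqrt k * ((k : ℝ) / Real.exp 1) ^ k ≤ (k.factorial : ℝ) := by
  obtain ⟨m, rfl⟩ : ∃ m, k = m + 1 := ⟨k - 1, by omega⟩
  have h1 : (1 : ℝ) ≤ Stirling.stirlingSeq (m + 1) := by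
    refine le_trans ?_ (aux_sqrtpi_le_stirlingSeq m)
    rw [show (1:ℝ) = Real.sqrt 1 by rw [Real.sqrt_one]]
    exact Real.sqrt_le_sqrt (by linarith [Real.pi_gt_three])
  have hden : (0 : ℝ) < Real.sqrt (2 * (m + 1 : ℕ) : ℝ) * (((m + 1 : ℕ) : ℝ) / Real.exp 1) ^ (m + 1) := by
    positivity
  have h2 : Real.sqrt (2 * (m + 1 : ℕ) : ℝ) * (((m + 1 : ℕ) : ℝ) / Real.exp 1) ^ (m + 1) ≤ ((m + 1).factorial : ℝ) := by
    have := (one_le_div hden).mp h1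
    simpa [Stirling.stirlingSeq] using this
  refine le_trans ?_ h2
  have hs : Real.sqrt ((m + 1 : ℕ) : ℝ) ≤ Real.sqrt (2 * (m + 1 : ℕ) : ℝ) := by
    apply Real.sqrt_le_sqrt; push_cast; linarith [Nat.cast_nonneg (α := ℝ) m]
  exact mul_le_mul_of_nonneg_right hs (by positivity)

private lemma aux_choose_shift (M n D : ℕ) (hD : D + n ≤ M + 1) :
    ∀ k, k ≤ n → M.choose (n - k) * D ^ k ≤ M.choose n * n ^ k := by
  intro k
  induction k with
  | zero => simp
  | succ k ih =>
    intro hk1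
    have hk : k ≤ n := by omega
    have hnk : n - k = (n - (k + 1)) + 1 := by omega
    have key : M.choose (n - (k + 1)) * D ≤ M.choose (n - k) * n := by
      have h1 : M.choose (n - (k + 1)) * D ≤ M.choose (n - (k + 1)) * (M - (n - (k + 1))) :=
        Nat.mul_le_mul_left _ (by omega)
      have h2 : M.choose (n - (k + 1)) * (M - (n - (k + 1))) = M.choose (n - k) * (n - k) := by
        rw [hnk]
        exact (Nat.choose_succ_right_eq M (n - (k + 1))).symm
      have h3 : M.choose (n - k) * (n - k) ≤ M.choose (n - k) * n :=
        Nat.mul_le_mul_left _ (Nat.sub_le _ _)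
      omega
    calc M.choose (n - (k + 1)) * D ^ (k + 1)
        = (M.choose (n - (k + 1)) * D) * D ^ k := by ring
      _ ≤ (M.choose (n - k) * n) * D ^ k := Nat.mul_le_mul_right _ key
      _ = (M.choose (n - k) * D ^ k) * n := by ring
      _ ≤ (M.choose n * n ^ k) * n := Nat.mul_le_mul_right _ (ih hk)
      _ = M.choose n * n ^ (k + 1) := by ring

private lemma aux_A (n N : ℕ) (hn : 0 < n) (h2 : 2 * n ≤ N) :
    (((N - n).choose n : ℕ) : ℝ) ≤ (N.choose n : ℝ) * Real.exp (-((n : ℝ) ^ 2 / N)) := by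
  have hNpos : 0 < N := by omega
  have hNR : (0 : ℝ) < N := by exact_mod_cast hNpos
  have hfac : (0 : ℝ) < (n.factorial : ℝ) := by exact_mod_cast Nat.factorial_pos n
  suffices h : (((N - n).descFactorial n : ℕ) : ℝ) ≤ (N.descFactorial n : ℝ) * Real.exp (-((n : ℝ) ^ 2 / N)) by
    rw [Nat.descFactorial_eq_factorial_mul_choose, Nat.descFactorial_eq_factorial_mul_choose] at h
    push_cast at h
    have h' : (n.factorial : ℝ) * ((N - n).choose n : ℝ) ≤ (n.factorial : ℝ) * ((N.choose n : ℝ) * Real.exp (-((n : ℝ) ^ 2 / N))) := by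
      calc (n.factorial : ℝ) * ((N - n).choose n : ℝ) ≤ (n.factorial : ℝ) * (N.choose n : ℝ) * Real.exp (-((n : ℝ) ^ 2 / N)) := h
        _ = (n.factorial : ℝ) * ((N.choose n : ℝ) * Real.exp (-((n : ℝ) ^ 2 / N))) := by ring
    exact le_of_mul_le_mul_left h' hfac
  rw [Nat.descFactorial_eq_prod_range, Nat.descFactorial_eq_prod_range, Nat.cast_prod, Nat.cast_prod]
  have hexp : Real.exp (-((n : ℝ) ^ 2 / N)) = ∏ _i ∈ Finset.range n, Real.exp (-((n : ℝ) / N)) := by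
    rw [Finset.prod_const, ← Real.exp_nat_mul]
    congr 1
    rw [Finset.card_range]
    ring
  rw [hexp, ← Finset.prod_mul_distrib]
  apply Finset.prod_le_prod
  · intro i _; positivity
  · intro i hi
    have hi' : i < n := Finset.mem_range.mp hi
    have hcast : ((N - n - i : ℕ) : ℝ) = (N : ℝ) - n - i := by
      have h1 : n + i ≤ N := by omega
      rw [Nat.sub_sub, Nat.cast_sub h1]
      push_cast; ring
    have hNi : ((N - i : ℕ) : ℝ) = (N : ℝ) - i := by
      rw [Nat.cast_sub (by omega)]
    rw [hcast, hNi]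
    have h1 : (0 : ℝ) < (N : ℝ) - i := by
      have : (i : ℝ) < n := by exact_mod_cast hi'
      have : (n : ℝ) ≤ N := by exact_mod_cast (by omega : n ≤ N)
      linarith
    have hexp1 : 1 - (n : ℝ) / N ≤ Real.exp (-((n : ℝ) / N)) := by
      have := Real.add_one_le_exp (-((n : ℝ) / N)); linarith
    have key : (N : ℝ) - n - i ≤ ((N : ℝ) - i) * (1 - (n : ℝ) / N) := by
      have heq : ((N : ℝ) - i) * (1 - (n : ℝ) / N) - ((N : ℝ) - n - i) = (n : ℝ) * i / N := by
        field_simp; ring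
      have hpos : (0 : ℝ) ≤ (n : ℝ) * i / N := by positivity
      linarith
    calc (N : ℝ) - n - i ≤ ((N : ℝ) - i) * (1 - (n : ℝ) / N) := key
      _ ≤ ((N : ℝ) - i) * Real.exp (-((n : ℝ) / N)) := mul_le_mul_of_nonneg_left hexp1 h1.le

set_option maxHeartbeats 1000000 in
/-- **Asymptotics of binomial coefficients (simplified form).**  There is an absolute
constant C < ∞ such that for all integers 0 ≤ k ≤ n ≤ N/3 with N ≥ n^{3/2},
`C(n,k) C(N−n,n−k) / C(N,n) ≤ (C n / (√(k∨1) ((n−k)∨1))) exp(k log(e n²/(Nk)) − n²/N + 2kn/N)`,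
where `k log(e n²/(Nk))` is interpreted as 0 for k = 0. -/
theorem binom_asymptotics_simplified :
    ∃ C : ℝ, 0 < C ∧ ∀ k n N : ℕ, 0 < n → 0 < N → k ≤ n → 3 * n ≤ N →
      (n : ℝ) ^ ((3 : ℝ) / 2) ≤ (N : ℝ) →
      ((n.choose k : ℝ) * ((N - n).choose (n - k) : ℝ)) / (N.choose n : ℝ) ≤
        C * n / (Real.sqrt (max (k : ℝ) 1) * max ((n : ℝ) - k) 1) *
          Real.exp ((k : ℝ) * Real.log (Real.exp 1 * (n : ℝ) ^ 2 / (N * k))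
            - (n : ℝ) ^ 2 / N + 2 * k * n / N) := by
  refine ⟨Real.exp 12, Real.exp_pos 12, ?_⟩
  intro k n N hn hN hkn h3n hrpow
  have hnR : (1 : ℝ) ≤ n := by exact_mod_cast hn
  have hNR : (0 : ℝ) < N := by exact_mod_cast hN
  have h3nR : 3 * (n : ℝ) ≤ N := by exact_mod_cast h3n
  have h2n : 2 * n ≤ N := by omega
  have hnN : n ≤ N := by omega
  have hc3 : (0 : ℝ) < (N.choose n : ℝ) := by exact_mod_cast Nat.choose_pos hnN
  set D : ℕ := N - 2 * n with hDdef
  have hDcast : (D : ℝ) = (N : ℝ) - 2 * n := by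
    rw [hDdef, Nat.cast_sub h2n]; push_cast; ring
  have hDpos : (0 : ℝ) < D := by rw [hDcast]; linarith
  have hL2 : ((N - n).choose (n - k) : ℝ) * (D : ℝ) ^ k ≤ ((N - n).choose n : ℝ) * (n : ℝ) ^ k := by
    exact_mod_cast aux_choose_shift (N - n) n D (by omega) k hkn
  have hL3 : ((N - n).choose n : ℝ) ≤ (N.choose n : ℝ) * Real.exp (-((n : ℝ) ^ 2 / N)) :=
    aux_A n N hn h2n
  have hL1 : (n.choose k : ℝ) * (k.factorial : ℝ) ≤ (n : ℝ) ^ k := by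
    have h := Nat.descFactorial_le_pow n k
    rw [Nat.descFactorial_eq_factorial_mul_choose] at h
    have := (Nat.cast_le (α := ℝ)).mpr h
    push_cast at this
    linarith
  have hkfac : (0 : ℝ) < (k.factorial : ℝ) := by exact_mod_cast Nat.factorial_pos k
  have hDk : (0 : ℝ) < (D : ℝ) ^ k := by positivity
  have master : ((n.choose k : ℝ) * ((N - n).choose (n - k) : ℝ)) / (N.choose n : ℝ) ≤
      (n : ℝ) ^ (2 * k) / ((k.factorial : ℝ) * (D : ℝ) ^ k) * Real.exp (-((n : ℝ) ^ 2 / N)) := by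
    rw [div_le_iff₀ hc3]
    have e1 : ((N - n).choose (n - k) : ℝ) ≤
        ((N.choose n : ℝ) * Real.exp (-((n : ℝ) ^ 2 / N))) * ((n : ℝ) ^ k / (D : ℝ) ^ k) := by
      rw [← le_div_iff₀ hDk] at hL2
      refine hL2.trans ?_
      rw [div_le_iff₀ hDk]
      have : ((N - n).choose n : ℝ) * (n : ℝ) ^ k ≤
          ((N.choose n : ℝ) * Real.exp (-((n : ℝ) ^ 2 / N))) * (n : ℝ) ^ k :=
        mul_le_mul_of_nonneg_right hL3 (by positivity)
      calc ((N - n).choose n : ℝ) * (n : ℝ) ^ k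
          ≤ ((N.choose n : ℝ) * Real.exp (-((n : ℝ) ^ 2 / N))) * ((n : ℝ) ^ k) := this
        _ = ((N.choose n : ℝ) * Real.exp (-((n : ℝ) ^ 2 / N))) * ((n : ℝ) ^ k / (D : ℝ) ^ k) * (D : ℝ) ^ k := by
            field_simp
    have e2 : (n.choose k : ℝ) ≤ (n : ℝ) ^ k / (k.factorial : ℝ) := by
      rw [le_div_iff₀ hkfac]; exact hL1
    calc (n.choose k : ℝ) * ((N - n).choose (n - k) : ℝ)
        ≤ ((n : ℝ) ^ k / (k.factorial : ℝ)) * (((N.choose n : ℝ) * Real.exp (-((n : ℝ) ^ 2 / N))) * ((n : ℝ) ^ k / (D : ℝ) ^ k)) := by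
          apply mul_le_mul e2 e1 (by positivity) (by positivity)
      _ = (n : ℝ) ^ (2 * k) / ((k.factorial : ℝ) * (D : ℝ) ^ k) * Real.exp (-((n : ℝ) ^ 2 / N)) * (N.choose n : ℝ) := by
          rw [two_mul, pow_add]; field_simp
  rcases Nat.eq_zero_or_pos k with hk0 | hkpos
  · subst hk0
    simp only [Nat.cast_zero, pow_zero, mul_zero, Nat.factorial_zero, Nat.cast_one, one_mul,
      mul_one, zero_mul, zero_div, Nat.sub_zero, Nat.choose_zero_right, Nat.cast_ofNat,
      sub_zero] at master ⊢
    have hmax2 : max (n : ℝ) 1 = (n : ℝ) := max_eq_left hnR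
    have hmax1 : Real.sqrt (max (0 : ℝ) 1) = 1 := by
      rw [max_eq_right zero_le_one, Real.sqrt_one]
    rw [hmax1, hmax2, one_mul]
    have hne : (n : ℝ) ≠ 0 := by linarith
    have hfrac : Real.exp 12 * (n : ℝ) / (n : ℝ) = Real.exp 12 := by field_simp
    rw [hfrac]
    have harg : (0 : ℝ) - (n : ℝ) ^ 2 / N + 0 = -((n : ℝ) ^ 2 / N) := by ring
    rw [harg]
    calc ((N - n).choose n : ℝ) / (N.choose n : ℝ)
        ≤ 1 / (1 * 1) * Real.exp (-((n : ℝ) ^ 2 / N)) := by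
          simpa using master
      _ = Real.exp (-((n : ℝ) ^ 2 / N)) := by norm_num
      _ ≤ Real.exp 12 * Real.exp (-((n : ℝ) ^ 2 / N)) := by
          nlinarith [Real.one_le_exp (by norm_num : (0:ℝ) ≤ 12), Real.exp_pos (-((n : ℝ) ^ 2 / N))]
  · -- k ≥ 1
    have hkR : (1 : ℝ) ≤ k := by exact_mod_cast hkpos
    have hk0R : (0 : ℝ) < k := by linarith
    have hmaxk : max ((k : ℕ) : ℝ) 1 = (k : ℝ) := max_eq_left hkR
    have hsqrtk : (0 : ℝ) < Real.sqrt k := Real.sqrt_pos.mpr hk0R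
    have hfact : Real.sqrt k * ((k : ℝ) / Real.exp 1) ^ k ≤ (k.factorial : ℝ) := aux_factorial_ge k hkpos
    -- N ≤ D * exp(2n/N + 12 n²/N²)
    have hstep : (N : ℝ) ≤ (D : ℝ) * Real.exp (2 * (n : ℝ) / N + 12 * (n : ℝ) ^ 2 / N ^ 2) := by
      set x : ℝ := 2 * (n : ℝ) / N with hxdef
      have hx0 : 0 ≤ x := by positivity
      have hx23 : x ≤ 2 / 3 := by
        rw [hxdef, div_le_iff₀ hNR]; linarith
      have hexp : 1 + (x + 3 * x ^ 2) ≤ Real.exp (x + 3 * x ^ 2) := by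
        have := Real.add_one_le_exp (x + 3 * x ^ 2); linarith
      have hprod : (1 : ℝ) ≤ (1 - x) * (1 + (x + 3 * x ^ 2)) := by nlinarith
      have hDx : (D : ℝ) = N * (1 - x) := by
        have hh : (N : ℝ) * (2 * (n : ℝ) / N) = 2 * (n : ℝ) := by
          field_simp
        rw [hDcast, hxdef, mul_sub, mul_one, hh]
      have harg : x + 3 * x ^ 2 = 2 * (n : ℝ) / N + 12 * (n : ℝ) ^ 2 / N ^ 2 := by
        rw [hxdef]; field_simp [hNR.ne']; ring
      have h1x : 0 < 1 - x := by linarith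
      calc (N : ℝ) = N * 1 := (mul_one _).symm
        _ ≤ N * ((1 - x) * (1 + (x + 3 * x ^ 2))) := by
            apply mul_le_mul_of_nonneg_left hprod hNR.le
        _ ≤ N * ((1 - x) * Real.exp (x + 3 * x ^ 2)) := by
            apply mul_le_mul_of_nonneg_left _ hNR.le
            exact mul_le_mul_of_nonneg_left hexp h1x.le
        _ = (D : ℝ) * Real.exp (x + 3 * x ^ 2) := by rw [hDx]; ring
        _ = (D : ℝ) * Real.exp (2 * (n : ℝ) / N + 12 * (n : ℝ) ^ 2 / N ^ 2) := by rw [harg]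
    have hDk' : (N : ℝ) ^ k * Real.exp (-((k : ℝ) * (2 * (n : ℝ) / N + 12 * (n : ℝ) ^ 2 / N ^ 2)))
        ≤ (D : ℝ) ^ k := by
      have hDkN : (N : ℝ) ^ k ≤ (D : ℝ) ^ k *
          Real.exp ((k : ℝ) * (2 * (n : ℝ) / N + 12 * (n : ℝ) ^ 2 / N ^ 2)) := by
        calc (N : ℝ) ^ k ≤ ((D : ℝ) * Real.exp (2 * (n : ℝ) / N + 12 * (n : ℝ) ^ 2 / N ^ 2)) ^ k :=
              pow_le_pow_left₀ hNR.le hstep k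
          _ = (D : ℝ) ^ k * Real.exp ((k : ℝ) * (2 * (n : ℝ) / N + 12 * (n : ℝ) ^ 2 / N ^ 2)) := by
              rw [mul_pow, Real.exp_nat_mul]
      rw [Real.exp_neg, ← div_eq_mul_inv, div_le_iff₀ (Real.exp_pos _)]
      exact hDkN
    -- k * 12 n²/N² ≤ 12
    have hn3 : (n : ℝ) ^ 3 ≤ (N : ℝ) ^ 2 := by
      have hn0 : (0 : ℝ) < (n : ℝ) := by linarith
      have hn32 : (n : ℝ) ^ ((3 : ℝ) / 2) * (n : ℝ) ^ ((3 : ℝ) / 2) = (n : ℝ) ^ 3 := by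
        rw [← Real.rpow_add hn0]
        norm_num
      have ha0 : 0 ≤ (n : ℝ) ^ ((3 : ℝ) / 2) := Real.rpow_nonneg (Nat.cast_nonneg n) _
      have hmm := mul_self_le_mul_self ha0 hrpow
      rw [hn32] at hmm
      nlinarith [hmm]
    have hknR : (k : ℝ) ≤ n := by exact_mod_cast hkn
    have hk12 : (k : ℝ) * (12 * (n : ℝ) ^ 2 / N ^ 2) ≤ 12 := by
      have h1 : (k : ℝ) * (n : ℝ) ^ 2 ≤ (N : ℝ) ^ 2 := by
        have hm := mul_le_mul_of_nonneg_right hknR (sq_nonneg (n : ℝ))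
        have he : (n : ℝ) * (n : ℝ) ^ 2 = (n : ℝ) ^ 3 := by ring
        linarith [hn3]
      have h2 : (k : ℝ) * (12 * (n : ℝ) ^ 2 / N ^ 2) = 12 * ((k : ℝ) * (n : ℝ) ^ 2 / N ^ 2) := by ring
      rw [h2]
      have h3 : (k : ℝ) * (n : ℝ) ^ 2 / N ^ 2 ≤ 1 := by
        rw [div_le_one (by positivity)]; exact h1
      linarith
    have hlogarg : (0 : ℝ) < Real.exp 1 * (n : ℝ) ^ 2 / ((N : ℝ) * k) := by positivity
    have hpowlog : Real.exp ((k : ℝ) * Real.log (Real.exp 1 * (n : ℝ) ^ 2 / ((N : ℝ) * k))) =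
        (Real.exp 1 * (n : ℝ) ^ 2 / ((N : ℝ) * k)) ^ k := by
      rw [Real.exp_nat_mul, Real.exp_log hlogarg]
    -- key inequality
    have key : (n : ℝ) ^ (2 * k) / ((k.factorial : ℝ) * (D : ℝ) ^ k) ≤
        Real.exp 12 / Real.sqrt k *
          ((Real.exp 1 * (n : ℝ) ^ 2 / ((N : ℝ) * k)) ^ k * Real.exp (2 * (k : ℝ) * n / N)) := by
      rw [div_le_iff₀ (by positivity)]
      set C' : ℝ := Real.exp 12 / Real.sqrt k *
        ((Real.exp 1 * (n : ℝ) ^ 2 / ((N : ℝ) * k)) ^ k * Real.exp (2 * (k : ℝ) * n / N)) with hC'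
      have hC'pos : 0 < C' := by rw [hC']; positivity
      have hlow : (Real.sqrt k * ((k : ℝ) / Real.exp 1) ^ k) *
          ((N : ℝ) ^ k * Real.exp (-((k : ℝ) * (2 * (n : ℝ) / N + 12 * (n : ℝ) ^ 2 / N ^ 2))))
          ≤ (k.factorial : ℝ) * (D : ℝ) ^ k :=
        mul_le_mul hfact hDk' (by positivity) (by positivity)
      refine le_trans ?_ (mul_le_mul_of_nonneg_left hlow hC'pos.le)
      -- show n^(2k) ≤ C' * (√k (k/e)^k * (N^k exp(−k(2n/N+12n²/N²))))
      have hcollapse : (Real.exp 1 * (n : ℝ) ^ 2 / ((N : ℝ) * k)) ^ k * (((k : ℝ) / Real.exp 1) ^ k * (N : ℝ) ^ k)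
          = (n : ℝ) ^ (2 * k) := by
        rw [← mul_pow, ← mul_pow, pow_mul]
        congr 1
        have hek : Real.exp 1 ≠ 0 := (Real.exp_pos 1).ne'
        field_simp [hNR.ne', hk0R.ne', hek]
      have hexpcomb : Real.exp (2 * (k : ℝ) * n / N) *
          Real.exp (-((k : ℝ) * (2 * (n : ℝ) / N + 12 * (n : ℝ) ^ 2 / N ^ 2))) =
          Real.exp (-((k : ℝ) * (12 * (n : ℝ) ^ 2 / N ^ 2))) := by
        rw [← Real.exp_add]
        congr 1
        field_simp [hNR.ne']
        ring
      have hC'eq : C' * ((Real.sqrt k * ((k : ℝ) / Real.exp 1) ^ k) *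
          ((N : ℝ) ^ k * Real.exp (-((k : ℝ) * (2 * (n : ℝ) / N + 12 * (n : ℝ) ^ 2 / N ^ 2))))) =
          Real.exp 12 * Real.exp (-((k : ℝ) * (12 * (n : ℝ) ^ 2 / N ^ 2))) * (n : ℝ) ^ (2 * k) := by
        rw [hC']
        rw [← hcollapse, ← hexpcomb]
        field_simp [hsqrtk.ne']
      rw [hC'eq]
      have hge1 : (1 : ℝ) ≤ Real.exp 12 * Real.exp (-((k : ℝ) * (12 * (n : ℝ) ^ 2 / N ^ 2))) := by
        rw [← Real.exp_add]
        apply Real.one_le_exp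
        linarith
      nlinarith [pow_pos (lt_of_lt_of_le one_pos hnR) (2 * k), hge1]
    -- assemble
    have hmaxnk : (0 : ℝ) < max ((n : ℝ) - k) 1 := lt_of_lt_of_le one_pos (le_max_right _ _)
    have hmaxnk' : max ((n : ℝ) - k) 1 ≤ n := max_le (by linarith) hnR
    have hfrac : Real.exp 12 / Real.sqrt k ≤
        Real.exp 12 * n / (Real.sqrt (max ((k : ℕ) : ℝ) 1) * max ((n : ℝ) - k) 1) := by
      rw [hmaxk, div_le_div_iff₀ hsqrtk (by positivity)]
      have h := mul_le_mul_of_nonneg_left hmaxnk' (mul_pos (Real.exp_pos 12) hsqrtk).le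
      nlinarith [h]
    calc ((n.choose k : ℝ) * ((N - n).choose (n - k) : ℝ)) / (N.choose n : ℝ)
        ≤ (n : ℝ) ^ (2 * k) / ((k.factorial : ℝ) * (D : ℝ) ^ k) * Real.exp (-((n : ℝ) ^ 2 / N)) := master
      _ ≤ (Real.exp 12 / Real.sqrt k *
            ((Real.exp 1 * (n : ℝ) ^ 2 / ((N : ℝ) * k)) ^ k * Real.exp (2 * (k : ℝ) * n / N))) *
            Real.exp (-((n : ℝ) ^ 2 / N)) :=
          mul_le_mul_of_nonneg_right key (Real.exp_nonneg _)
      _ = Real.exp 12 / Real.sqrt k *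
            (Real.exp ((k : ℝ) * Real.log (Real.exp 1 * (n : ℝ) ^ 2 / ((N : ℝ) * k))) *
             Real.exp (2 * (k : ℝ) * n / N) * Real.exp (-((n : ℝ) ^ 2 / N))) := by
          rw [hpowlog]; ring
      _ ≤ (Real.exp 12 * n / (Real.sqrt (max ((k : ℕ) : ℝ) 1) * max ((n : ℝ) - k) 1)) *
            (Real.exp ((k : ℝ) * Real.log (Real.exp 1 * (n : ℝ) ^ 2 / ((N : ℝ) * k))) *
             Real.exp (2 * (k : ℝ) * n / N) * Real.exp (-((n : ℝ) ^ 2 / N))) :=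
          mul_le_mul_of_nonneg_right hfrac (by positivity)
      _ = Real.exp 12 * n / (Real.sqrt (max ((k : ℕ) : ℝ) 1) * max ((n : ℝ) - k) 1) *
            Real.exp ((k : ℝ) * Real.log (Real.exp 1 * (n : ℝ) ^ 2 / ((N : ℝ) * k))
              - (n : ℝ) ^ 2 / N + 2 * (k : ℝ) * n / N) := by
          rw [← Real.exp_add, ← Real.exp_add]
          congr 1
          ring

end
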